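/- Counting flows by their zero sets: Let G = (V, E, ε) be a finite multigraph with an orientation (s, t), let q be a positive integer, H any finite abelian group of cardinality q, and A ⊆ E. Then q^{|E∖A| − r_G(E∖A)} = ∑_{B with A ⊆ B ⊆ E} χ*(G − B; q), where r_G(S) := |V| − k_G(S) and χ*(G − B; q) is the number of nowhere-zero H-flows of the deletion G − B. (Here q^{|E∖A| − r_G(E∖A)} counts all H-flows of G − A, and each such flow φ corresponds to the nowhere-zero flow of G − B for B = A ∪ {e ∈ E∖A : φ(e) = 0}.) -/

import Mathlib

open Finset SimpleGraph
set_option linter.unusedSectionVars false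
set_option maxHeartbeats 1000000

/-- The number of connected components of the spanning subgraph `(V, A)` of the
multigraph given by `ε : E → Sym2 V`. -/
noncomputable def multigraphComponents {V E : Type*} (ε : E → Sym2 V) (A : Finset E) : ℕ :=
  Nat.card (SimpleGraph.fromEdgeSet (ε '' (A : Set E))).ConnectedComponent

/-- The number of nowhere-zero `H`-flows of the multigraph with edge set `S` and
orientation given by source and target maps `s t : E → V`. -/
noncomputable def nzFlowCount {V E : Type*} [Fintype V] [Fintype E] [DecidableEq V]
    (s t : E → V) (S : Finset E) (H : Type*) [AddCommGroup H] [Fintype H] : ℕ :=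
  Nat.card {φ : {e : E // e ∈ S} → H //
    (∀ x : V, (∑ e : {e : E // e ∈ S}, if s e.1 = x then φ e else 0) =
              (∑ e : {e : E // e ∈ S}, if t e.1 = x then φ e else 0)) ∧
    ∀ e, φ e ≠ 0}



section Graph2


variable {V : Type*}

private lemma myReachSup (G : SimpleGraph V) (a b : V) (hab : a ≠ b) (x y : V) :
    (G ⊔ SimpleGraph.fromEdgeSet {s(a, b)}).Reachable x y ↔
      G.Reachable x y ∨ (G.Reachable x a ∧ G.Reachable b y) ∨
        (G.Reachable x b ∧ G.Reachable a y) := by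
  set G' := G ⊔ SimpleGraph.fromEdgeSet {s(a, b)} with hG'
  have hle : G ≤ G' := le_sup_left
  have hadj : G'.Adj a b := by
    refine Or.inr ?_
    simp [SimpleGraph.fromEdgeSet_adj, hab]
  constructor
  · rintro ⟨p⟩
    induction p with
    | nil => exact Or.inl (Reachable.refl _)
    | @cons u w v h p ih =>
      have h' : G.Adj u w ∨ (u = a ∧ w = b) ∨ (u = b ∧ w = a) := by
        rcases h with h | h
        · exact Or.inl h
        · rw [SimpleGraph.fromEdgeSet_adj, Set.mem_singleton_iff, Sym2.eq_iff] at h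
          rcases h.1 with ⟨h1, h2⟩ | ⟨h1, h2⟩
          · exact Or.inr (Or.inl ⟨h1, h2⟩)
          · exact Or.inr (Or.inr ⟨h1, h2⟩)
      rcases h' with h' | ⟨rfl, rfl⟩ | ⟨rfl, rfl⟩
      · rcases ih with hr | ⟨h1, h2⟩ | ⟨h1, h2⟩
        · exact Or.inl (h'.reachable.trans hr)
        · exact Or.inr (Or.inl ⟨h'.reachable.trans h1, h2⟩)
        · exact Or.inr (Or.inr ⟨h'.reachable.trans h1, h2⟩)
      · rcases ih with hr | ⟨h1, h2⟩ | ⟨h1, h2⟩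
        · exact Or.inr (Or.inl ⟨Reachable.refl _, hr⟩)
        · exact Or.inr (Or.inl ⟨Reachable.refl _, h2⟩)
        · exact Or.inl h2
      · rcases ih with hr | ⟨h1, h2⟩ | ⟨h1, h2⟩
        · exact Or.inr (Or.inr ⟨Reachable.refl _, hr⟩)
        · exact Or.inl h2
        · exact Or.inr (Or.inr ⟨Reachable.refl _, h2⟩)
  · rintro (hr | ⟨h1, h2⟩ | ⟨h1, h2⟩)
    · exact hr.mono hle
    · exact ((h1.mono hle).trans hadj.reachable).trans (h2.mono hle)
    · exact ((h1.mono hle).trans hadj.symm.reachable).trans (h2.mono hle)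

private lemma myCCCardReach (G : SimpleGraph V) (a b : V) (hab : a ≠ b)
    (hr : G.Reachable a b) :
    Nat.card (G ⊔ SimpleGraph.fromEdgeSet {s(a, b)}).ConnectedComponent =
      Nat.card G.ConnectedComponent := by
  have key : ∀ x y : V, (G ⊔ SimpleGraph.fromEdgeSet {s(a, b)}).Reachable x y ↔
      G.Reachable x y := by
    intro x y
    rw [myReachSup G a b hab]
    constructor
    · rintro (h | ⟨h1, h2⟩ | ⟨h1, h2⟩)
      · exact h
      · exact (h1.trans hr).trans h2
      · exact (h1.trans hr.symm).trans h2
    · exact Or.inl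
  exact Nat.card_congr (Quot.congrRight key)

private lemma myCCCardNotReach (G : SimpleGraph V) [Finite V] (a b : V) (hab : a ≠ b)
    (hnr : ¬ G.Reachable a b) :
    Nat.card G.ConnectedComponent =
      Nat.card (G ⊔ SimpleGraph.fromEdgeSet {s(a, b)}).ConnectedComponent + 1 := by
  classical
  set G' := G ⊔ SimpleGraph.fromEdgeSet {s(a, b)} with hG'
  have hle : G ≤ G' := le_sup_left
  have hadj : G'.Adj a b := by
    refine Or.inr ?_
    simp [SimpleGraph.fromEdgeSet_adj, hab]
  -- the bijection between nontrivial components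
  have e : {d : G.ConnectedComponent // d ≠ G.connectedComponentMk b} ≃
      G'.ConnectedComponent := by
    refine Equiv.ofBijective
      (fun d => d.1.map (SimpleGraph.Hom.ofLE hle)) ⟨?_, ?_⟩
    · rintro ⟨d, hd⟩ ⟨d', hd'⟩ h
      induction d using SimpleGraph.ConnectedComponent.ind with | _ x =>
      induction d' using SimpleGraph.ConnectedComponent.ind with | _ y =>
      simp only [SimpleGraph.ConnectedComponent.map_mk,
        SimpleGraph.Hom.ofLE_apply,
        SimpleGraph.ConnectedComponent.eq] at h ⊢
      simp only [ne_eq, SimpleGraph.ConnectedComponent.eq] at hd hd'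
      rw [myReachSup G a b hab] at h
      rcases h with h | ⟨h1, h2⟩ | ⟨h1, h2⟩
      · exact Subtype.ext (SimpleGraph.ConnectedComponent.sound h)
      · exact absurd h2.symm hd'
      · exact absurd h1 hd
    · intro c
      induction c using SimpleGraph.ConnectedComponent.ind with | _ v =>
      by_cases hv : G.Reachable b v
      · refine ⟨⟨G.connectedComponentMk a, ?_⟩, ?_⟩
        · simp only [ne_eq, SimpleGraph.ConnectedComponent.eq]
          exact hnr
        · simp only [SimpleGraph.ConnectedComponent.map_mk,
            SimpleGraph.Hom.ofLE_apply, SimpleGraph.ConnectedComponent.eq]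
          exact hadj.reachable.trans (hv.mono hle)
      · refine ⟨⟨G.connectedComponentMk v, ?_⟩, ?_⟩
        · simp only [ne_eq, SimpleGraph.ConnectedComponent.eq]
          exact fun h => hv h.symm
        · simp [SimpleGraph.ConnectedComponent.map_mk,
            SimpleGraph.Hom.ofLE_apply]
  haveI : Fintype G.ConnectedComponent := Fintype.ofFinite _
  have hcard := Nat.card_congr e
  rw [← hcard, Nat.card_eq_fintype_card, Nat.card_eq_fintype_card]
  rw [Fintype.card_subtype_compl (p := fun d => d = G.connectedComponentMk b)]
  have h1 : Fintype.card {d : G.ConnectedComponent // d = G.connectedComponentMk b} = 1 :=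
    Fintype.card_subtype_eq _
  rw [h1]
  have h2 : 1 ≤ Fintype.card G.ConnectedComponent :=
    Fintype.card_pos_iff.mpr ⟨G.connectedComponentMk b⟩
  omega

private lemma myCCCardBot [Finite V] :
    Nat.card (⊥ : SimpleGraph V).ConnectedComponent = Nat.card V := by
  refine Nat.card_congr (Equiv.ofBijective
    (fun v => (⊥ : SimpleGraph V).connectedComponentMk v) ⟨?_, ?_⟩).symm
  · intro x y h
    exact (SimpleGraph.reachable_bot).mp (SimpleGraph.ConnectedComponent.exact h)
  · intro c
    induction c using SimpleGraph.ConnectedComponent.ind with | _ v =>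
    exact ⟨v, rfl⟩



end Graph2

section Flows
variable {V E : Type*} [Fintype V] [Fintype E] [DecidableEq V] (s t : E → V)
variable {H : Type*} [AddCommGroup H] [Fintype H]


private def myExc (f : E → H) (x : V) : H :=
  (∑ e, if s e = x then f e else 0) - (∑ e, if t e = x then f e else 0)

private lemma myExc_sumaux (c : E → V) (f g : E → H) (x : V) :
    (∑ e, if c e = x then (f - g) e else 0) =
      (∑ e, if c e = x then f e else 0) - (∑ e, if c e = x then g e else 0) := by
  rw [← Finset.sum_sub_distrib]
  refine Finset.sum_congr rfl fun e _ => ?_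
  split <;> simp

private lemma myExc_sub (f g : E → H) (x : V) :
    myExc s t (f - g) x = myExc s t f x - myExc s t g x := by
  unfold myExc
  rw [myExc_sumaux, myExc_sumaux]
  abel

private lemma myExc_add (f g : E → H) (x : V) :
    myExc s t (f + g) x = myExc s t f x + myExc s t g x := by
  have := myExc_sub s t (f + g) g x
  simp only [add_sub_cancel_right] at this
  rw [this]
  abel

private lemma myExc_single [DecidableEq E] (e0 : E) (h : H) (x : V) :
    myExc s t (fun e => if e = e0 then h else 0) x =
      (if s e0 = x then h else 0) - (if t e0 = x then h else 0) := by
  have key : ∀ c : E → V, (∑ e, if c e = x then (if e = e0 then h else 0) else 0) =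
      (if c e0 = x then h else 0) := by
    intro c
    rw [Finset.sum_eq_single e0]
    · simp
    · intro e _ hne; simp [hne]
    · simp
  unfold myExc
  rw [key, key]

private lemma myWalkFlow [DecidableEq E] (ε : E → Sym2 V) (hst : ∀ e, ε e = s(s e, t e))
    (S : Finset E) {u v : V}
    (p : (SimpleGraph.fromEdgeSet (ε '' (S : Set E))).Walk u v) (h : H) :
    ∃ f : E → H, (∀ e ∉ S, f e = 0) ∧
      ∀ x, myExc s t f x = (if u = x then h else 0) - (if v = x then h else 0) := by
  induction p with
  | nil => exact ⟨0, fun e _ => rfl, fun x => by simp [myExc]⟩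
  | @cons u w v hadj p ih =>
    rw [SimpleGraph.fromEdgeSet_adj] at hadj
    obtain ⟨⟨e0, he0S, he0⟩, hne⟩ := hadj
    have he0S' : e0 ∈ S := he0S
    have hcases : (s e0 = u ∧ t e0 = w) ∨ (s e0 = w ∧ t e0 = u) := by
      have h2 : s(s e0, t e0) = s(u, w) := (hst e0).symm.trans he0
      rwa [Sym2.eq_iff] at h2
    obtain ⟨f, hf1, hf2⟩ := ih
    rcases hcases with ⟨h1, h2⟩ | ⟨h1, h2⟩
    · refine ⟨f + fun e => if e = e0 then h else 0, ?_, ?_⟩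
      · intro e he
        have hne0 : e ≠ e0 := fun hh => he (hh ▸ he0S')
        simp [hf1 e he, hne0]
      · intro x
        rw [myExc_add, hf2 x, myExc_single, h1, h2]
        abel
    · refine ⟨f - fun e => if e = e0 then h else 0, ?_, ?_⟩
      · intro e he
        have hne0 : e ≠ e0 := fun hh => he (hh ▸ he0S')
        simp [hf1 e he, hne0]
      · intro x
        rw [myExc_sub, hf2 x, myExc_single, h1, h2]
        abel

private lemma myCardInsert [DecidableEq E] (S : Finset E) (e0 : E) (he0 : e0 ∉ S)
    (g : H → E → H) (hgK : ∀ h x, myExc s t (g h) x = 0)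
    (hgs : ∀ h, ∀ e ∉ insert e0 S, g h e = 0) (hge : ∀ h, g h e0 = h) :
    Nat.card {f : E → H // (∀ x, myExc s t f x = 0) ∧ ∀ e ∉ insert e0 S, f e = 0} =
      Fintype.card H *
        Nat.card {f : E → H // (∀ x, myExc s t f x = 0) ∧ ∀ e ∉ S, f e = 0} := by
  rw [← Nat.card_eq_fintype_card, ← Nat.card_prod]
  refine Nat.card_congr ?_
  refine { toFun := fun f => (f.1 e0, ⟨f.1 - g (f.1 e0), ?_, ?_⟩),
           invFun := fun p => ⟨p.2.1 + g p.1, ?_, ?_⟩,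
           left_inv := ?_, right_inv := ?_ }
  · intro x
    rw [myExc_sub, f.2.1 x, hgK]
    simp
  · intro e he
    by_cases hee : e = e0
    · subst hee
      simp [hge]
    · have he' : e ∉ insert e0 S := by
        simp only [Finset.mem_insert, not_or] at he ⊢
        exact ⟨hee, fun hS => he (by simp [hS])⟩
      simp [f.2.2 e he', hgs _ e he']
  · intro x
    rw [myExc_add, p.2.2.1 x, hgK]
    simp
  · intro e he
    have heS : e ∉ S := fun hS => he (Finset.mem_insert_of_mem hS)
    simp [p.2.2.2 e heS, hgs _ e he]
  · intro f
    refine Subtype.ext ?_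
    simp
  · rintro ⟨h, f⟩
    have hv : (f.1 + g h) e0 = h := by
      simp [f.2.2 e0 he0, hge]
    refine Prod.ext hv (Subtype.ext ?_)
    show f.1 + g h - g ((f.1 + g h) e0) = f.1
    rw [hv]
    exact add_sub_cancel_right _ _

private lemma myBridgeZero [DecidableEq E] (ε : E → Sym2 V) (hst : ∀ e, ε e = s(s e, t e))
    (S : Finset E) (e0 : E)
    (hnr : ¬ (SimpleGraph.fromEdgeSet (ε '' (S : Set E))).Reachable (s e0) (t e0))
    (f : E → H) (hK : ∀ x, myExc s t f x = 0) (hsupp : ∀ e ∉ insert e0 S, f e = 0) :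
    f e0 = 0 := by
  classical
  set G := SimpleGraph.fromEdgeSet (ε '' (S : Set E)) with hG
  set C := Finset.univ.filter (fun x => G.Reachable (s e0) x) with hC
  have h1 : ∑ x ∈ C, myExc s t f x = 0 := by simp [hK]
  have h2 : ∑ x ∈ C, myExc s t f x =
      ∑ e, ((if s e ∈ C then f e else 0) - (if t e ∈ C then f e else 0)) := by
    have hswap : ∀ c : E → V,
        (∑ x ∈ C, ∑ e, (if c e = x then f e else 0)) =
          ∑ e, (if c e ∈ C then f e else 0) := by
      intro c
      rw [Finset.sum_comm]
      exact Finset.sum_congr rfl fun e _ => Finset.sum_ite_eq C (c e) (fun _ => f e)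
    unfold myExc
    rw [Finset.sum_sub_distrib, hswap, hswap, ← Finset.sum_sub_distrib]
  have h3 : ∑ e, ((if s e ∈ C then f e else 0) - (if t e ∈ C then f e else 0)) = f e0 := by
    rw [Finset.sum_eq_single e0]
    · have hs : s e0 ∈ C := by
        simp only [hC, Finset.mem_filter, Finset.mem_univ, true_and]
        exact SimpleGraph.Reachable.refl _
      have ht : t e0 ∉ C := by
        simp only [hC, Finset.mem_filter, Finset.mem_univ, true_and]
        exact hnr
      simp [hs, ht]
    · intro e _ hne
      by_cases heS : e ∈ S
      · by_cases hste : s e = t e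
        · rw [hste]; simp
        · have hadj : G.Adj (s e) (t e) := by
            rw [hG, SimpleGraph.fromEdgeSet_adj]
            exact ⟨⟨e, heS, hst e⟩, hste⟩
          have hiff : s e ∈ C ↔ t e ∈ C := by
            simp only [hC, Finset.mem_filter, Finset.mem_univ, true_and]
            exact ⟨fun hh => hh.trans hadj.reachable, fun hh => hh.trans hadj.symm.reachable⟩
          by_cases hsC : s e ∈ C
          · simp [hsC, hiff.mp hsC]
          · have htC : t e ∉ C := fun hh => hsC (hiff.mpr hh)
            simp [hsC, htC]
      · have : f e = 0 := hsupp e (by simp [heS, hne])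
        simp [this]
    · simp
  rw [h2, h3] at h1
  exact h1

private lemma myCardBridgeAux [DecidableEq E] (ε : E → Sym2 V) (hst : ∀ e, ε e = s(s e, t e))
    (S : Finset E) (e0 : E)
    (hnr : ¬ (SimpleGraph.fromEdgeSet (ε '' (S : Set E))).Reachable (s e0) (t e0)) :
    Nat.card {f : E → H // (∀ x, myExc s t f x = 0) ∧ ∀ e ∉ insert e0 S, f e = 0} =
      Nat.card {f : E → H // (∀ x, myExc s t f x = 0) ∧ ∀ e ∉ S, f e = 0} := by
  refine Nat.card_congr (Equiv.subtypeEquivRight fun f => ?_)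
  constructor
  · rintro ⟨hK, hsupp⟩
    refine ⟨hK, fun e he => ?_⟩
    by_cases hee : e = e0
    · subst hee
      exact myBridgeZero s t ε hst S e hnr f hK hsupp
    · exact hsupp e (by simp [hee, he])
  · rintro ⟨hK, hsupp⟩
    exact ⟨hK, fun e he => hsupp e (fun hS => he (Finset.mem_insert_of_mem hS))⟩

private lemma myCardEmpty :
    Nat.card {f : E → H // (∀ x, myExc s t f x = 0) ∧ ∀ e ∉ (∅ : Finset E), f e = 0} = 1 := by
  haveI : Unique {f : E → H // (∀ x, myExc s t f x = 0) ∧ ∀ e ∉ (∅ : Finset E), f e = 0} := by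
    refine ⟨⟨⟨0, fun x => by simp [myExc], fun e _ => rfl⟩⟩, ?_⟩
    rintro ⟨f, _, hsupp⟩
    exact Subtype.ext (funext fun e => hsupp e (by simp))
  exact Nat.card_unique


private lemma myMainCount [DecidableEq E] (ε : E → Sym2 V) (hst : ∀ e, ε e = s(s e, t e))
    (S : Finset E) :
    Nat.card {f : E → H // (∀ x, myExc s t f x = 0) ∧ ∀ e ∉ S, f e = 0} *
        (Fintype.card H) ^ (Fintype.card V) =
      (Fintype.card H) ^ (S.card + multigraphComponents ε S) := by
  classical
  induction S using Finset.induction_on with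
  | empty =>
    have hc : multigraphComponents ε (∅ : Finset E) = Fintype.card V := by
      unfold multigraphComponents
      rw [Finset.coe_empty, Set.image_empty, SimpleGraph.fromEdgeSet_empty, myCCCardBot,
        Nat.card_eq_fintype_card]
    rw [myCardEmpty, hc]
    simp
  | @insert e0 S he0 ih =>
    have hGi : SimpleGraph.fromEdgeSet (ε '' ((insert e0 S : Finset E) : Set E)) =
        SimpleGraph.fromEdgeSet (ε '' (S : Set E)) ⊔
          SimpleGraph.fromEdgeSet {s(s e0, t e0)} := by
      rw [Finset.coe_insert, Set.image_insert_eq, Set.insert_eq,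
        SimpleGraph.fromEdgeSet_union, hst e0, sup_comm]
    by_cases hl : s e0 = t e0
    · -- loop case
      have hEq : SimpleGraph.fromEdgeSet (ε '' (S : Set E)) ⊔
          SimpleGraph.fromEdgeSet {s(s e0, t e0)} = SimpleGraph.fromEdgeSet (ε '' (S : Set E)) := by
        ext x y
        simp only [SimpleGraph.sup_adj, SimpleGraph.fromEdgeSet_adj, Set.mem_singleton_iff,
          Sym2.eq_iff]
        constructor
        · rintro (h | ⟨(⟨rfl, rfl⟩ | ⟨rfl, rfl⟩), hne⟩)
          · exact h
          · exact absurd hl hne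
          · exact absurd hl.symm hne
        · exact Or.inl
      have hcomp : multigraphComponents ε (insert e0 S) = multigraphComponents ε S := by
        unfold multigraphComponents
        rw [hGi, hEq]
      have hcard := myCardInsert (H := H) s t S e0 he0 (fun (h : H) e => if e = e0 then h else 0)
        (fun h x => by
          show myExc s t (fun e => if e = e0 then h else 0) x = 0
          rw [myExc_single, hl]; exact sub_self _)
        (fun h e he => by
          have hne0 : e ≠ e0 := fun hh => he (hh ▸ Finset.mem_insert_self e0 S)
          simp [hne0])
        (fun h => by simp)
      rw [hcard, hcomp, Finset.card_insert_of_notMem he0, mul_assoc, ih]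
      ring
    · by_cases hr : (SimpleGraph.fromEdgeSet (ε '' (S : Set E))).Reachable (s e0) (t e0)
      · -- e0 joins vertices in the same component
        have hcomp : multigraphComponents ε (insert e0 S) = multigraphComponents ε S := by
          unfold multigraphComponents
          rw [hGi]
          exact myCCCardReach _ _ _ hl hr
        obtain ⟨p⟩ := hr.symm
        have hg : ∀ h : H, ∃ g0 : E → H, (∀ x, myExc s t g0 x = 0) ∧
            (∀ e ∉ insert e0 S, g0 e = 0) ∧ g0 e0 = h := by
          intro h
          obtain ⟨f0, hf0s, hf0e⟩ := myWalkFlow s t ε hst S p h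
          refine ⟨f0 + fun e => if e = e0 then h else 0, ?_, ?_, ?_⟩
          · intro x
            rw [myExc_add, hf0e x, myExc_single]
            abel
          · intro e he
            have hne0 : e ≠ e0 := fun hh => he (hh ▸ Finset.mem_insert_self e0 S)
            have heS : e ∉ S := fun hh => he (Finset.mem_insert_of_mem hh)
            simp [hf0s e heS, hne0]
          · simp [hf0s e0 he0]
        choose g hg1 hg2 hg3 using hg
        rw [myCardInsert s t S e0 he0 g hg1 hg2 hg3, hcomp,
          Finset.card_insert_of_notMem he0, mul_assoc, ih]
        ring
      · -- bridge case
        have hcomp : multigraphComponents ε S = multigraphComponents ε (insert e0 S) + 1 := by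
          unfold multigraphComponents
          rw [hGi]
          exact myCCCardNotReach _ _ _ hl hr
        rw [myCardBridgeAux s t ε hst S e0 hr, ih, hcomp, Finset.card_insert_of_notMem he0]
        ring

private lemma mySumExt (S : Finset E) (g : E → H) (hg : ∀ e ∉ S, g e = 0) (c : E → V) (x : V) :
    (∑ e, if c e = x then g e else 0) =
      ∑ e : {e : E // e ∈ S}, if c e.1 = x then g e.1 else 0 := by
  rw [Finset.sum_coe_sort S (fun e => if c e = x then g e else 0)]
  symm
  apply Finset.sum_subset (Finset.subset_univ S)
  intro e _ heS
  simp [hg e heS]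

private lemma myNzEq [DecidableEq E] (B : Finset E) :
    nzFlowCount s t (Finset.univ \ B) H =
      Nat.card {f : E → H // (∀ x, myExc s t f x = 0) ∧ ∀ e, f e = 0 ↔ e ∈ B} := by
  classical
  unfold nzFlowCount
  refine Nat.card_congr ?_
  have hmemS : ∀ e : E, e ∈ Finset.univ \ B ↔ e ∉ B := by
    intro e; simp
  have key : ∀ (g : E → H), (∀ e ∉ Finset.univ \ B, g e = 0) → ∀ x : V,
      (myExc s t g x = 0 ↔
        ((∑ e : {e : E // e ∈ Finset.univ \ B}, if s e.1 = x then g e.1 else 0) =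
          ∑ e : {e : E // e ∈ Finset.univ \ B}, if t e.1 = x then g e.1 else 0)) := by
    intro g hg x
    unfold myExc
    rw [mySumExt (Finset.univ \ B) g hg s x, mySumExt (Finset.univ \ B) g hg t x,
      sub_eq_zero]
  refine { toFun := fun ψ => ?_, invFun := fun f => ?_, left_inv := ?_, right_inv := ?_ }
  · refine ⟨fun e => if h : e ∈ Finset.univ \ B then ψ.1 ⟨e, h⟩ else 0, ?_, ?_⟩
    · -- Kirchhoff
      intro x
      rw [key _ (fun e he => dif_neg he) x]
      have h1 : ∀ (c : E → V),
          (∑ e : {e : E // e ∈ Finset.univ \ B},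
            if c e.1 = x then (if h : e.1 ∈ Finset.univ \ B then ψ.1 ⟨e.1, h⟩ else 0) else 0) =
          ∑ e : {e : E // e ∈ Finset.univ \ B}, if c e.1 = x then ψ.1 e else 0 := by
        intro c
        refine Finset.sum_congr rfl fun e _ => ?_
        rw [dif_pos e.2]
      rw [h1, h1]
      exact ψ.2.1 x
    · intro e
      dsimp only
      by_cases he : e ∈ Finset.univ \ B
      · rw [dif_pos he]
        have heB : e ∉ B := (hmemS e).mp he
        simp only [heB, iff_false]
        exact ψ.2.2 ⟨e, he⟩
      · rw [dif_neg he]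
        have heB : e ∈ B := not_not.mp (fun hh => he ((hmemS e).mpr hh))
        simp [heB]
  · refine ⟨fun e => f.1 e.1, ?_, ?_⟩
    · intro x
      have hg : ∀ e ∉ Finset.univ \ B, f.1 e = 0 := by
        intro e he
        exact (f.2.2 e).mpr (not_not.mp (fun hh => he ((hmemS e).mpr hh)))
      exact (key f.1 hg x).mp (f.2.1 x)
    · intro e
      exact fun hh => ((hmemS e.1).mp e.2) ((f.2.2 e.1).mp hh)
  · intro ψ
    refine Subtype.ext (funext fun e => ?_)
    exact dif_pos e.2
  · intro f
    refine Subtype.ext (funext fun e => ?_)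
    dsimp only
    by_cases he : e ∈ Finset.univ \ B
    · exact dif_pos he
    · rw [dif_neg he]
      exact ((f.2.2 e).mpr (not_not.mp (fun hh => he ((hmemS e).mpr hh)))).symm

private lemma myPart1 [DecidableEq E] (A : Finset E) :
    Nat.card {f : E → H // (∀ x, myExc s t f x = 0) ∧ ∀ e ∈ A, f e = 0} =
      ∑ B ∈ Finset.univ.powerset.filter (fun B => A ⊆ B),
        Nat.card {f : E → H // (∀ x, myExc s t f x = 0) ∧ ∀ e, f e = 0 ↔ e ∈ B} := by
  classical
  rw [Nat.card_eq_fintype_card, Fintype.card_subtype]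
  rw [Finset.card_eq_sum_card_fiberwise
    (f := fun f : E → H => Finset.univ.filter (fun e => f e = 0))
    (t := Finset.univ.powerset.filter (fun B => A ⊆ B))
    (fun f hf => by
      simp only [Finset.mem_coe, Finset.mem_filter, Finset.mem_univ, true_and] at hf
      refine Finset.mem_filter.mpr ⟨Finset.mem_powerset.mpr (Finset.subset_univ _), ?_⟩
      intro e he
      exact Finset.mem_filter.mpr ⟨Finset.mem_univ _, hf.2 e he⟩)]
  refine Finset.sum_congr rfl fun B hB => ?_
  have hAB : A ⊆ B := (Finset.mem_filter.mp hB).2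
  rw [Nat.card_eq_fintype_card, Fintype.card_subtype]
  congr 1
  rw [Finset.filter_filter]
  apply Finset.filter_congr
  intro f _
  constructor
  · rintro ⟨⟨hK, h0⟩, hZ⟩
    refine ⟨hK, fun e => ?_⟩
    rw [← hZ]
    simp
  · rintro ⟨hK, hiff⟩
    refine ⟨⟨hK, fun e he => (hiff e).mpr (hAB he)⟩, ?_⟩
    ext e
    simp [hiff e]

end Flows

/-- Counting flows by their zero sets:
`q^{|E∖A| - r_G(E∖A)} = ∑_{A ⊆ B ⊆ E} χ*(G-B;q)`, where `r_G(S) = |V| - k_G(S)` and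
`|H| = q`. -/
theorem flows_by_zero_sets {V E : Type*} [Fintype V] [Fintype E]
    [DecidableEq V] [DecidableEq E]
    (ε : E → Sym2 V) (s t : E → V) (hst : ∀ e, ε e = s(s e, t e))
    (q : ℕ) (hq : 0 < q) (H : Type*) [AddCommGroup H] [Fintype H]
    (hH : Fintype.card H = q) (A : Finset E) :
    (q : ℚ) ^ (((Finset.univ \ A).card : ℤ) -
        ((Fintype.card V : ℤ) - (multigraphComponents ε (Finset.univ \ A) : ℤ))) =
      ∑ B ∈ Finset.univ.powerset.filter (fun B => A ⊆ B),
        (nzFlowCount s t (Finset.univ \ B) H : ℚ) := by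
  classical
  set S : Finset E := Finset.univ \ A with hS
  have hmain := myMainCount (H := H) s t ε hst S
  rw [hH] at hmain
  have hRHS : ∑ B ∈ Finset.univ.powerset.filter (fun B => A ⊆ B),
      (nzFlowCount s t (Finset.univ \ B) H : ℚ) =
      ((Nat.card {f : E → H // (∀ x, myExc s t f x = 0) ∧ ∀ e ∈ A, f e = 0} : ℕ) : ℚ) := by
    rw [myPart1 s t A, Nat.cast_sum]
    exact Finset.sum_congr rfl fun B _ => by rw [myNzEq s t B]
  have hsub : Nat.card {f : E → H // (∀ x, myExc s t f x = 0) ∧ ∀ e ∈ A, f e = 0}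
      = Nat.card {f : E → H // (∀ x, myExc s t f x = 0) ∧ ∀ e ∉ S, f e = 0} := by
    refine Nat.card_congr (Equiv.subtypeEquivRight fun f => ?_)
    constructor
    · rintro ⟨hK, h0⟩
      exact ⟨hK, fun e he => h0 e (by simpa [hS] using he)⟩
    · rintro ⟨hK, h0⟩
      exact ⟨hK, fun e he => h0 e (by simp [hS, he])⟩
  rw [hRHS, hsub]
  have hq0 : (q : ℚ) ≠ 0 := Nat.cast_ne_zero.mpr hq.ne'
  have hmainQ : (Nat.card {f : E → H // (∀ x, myExc s t f x = 0) ∧ ∀ e ∉ S, f e = 0} : ℚ) *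
      (q : ℚ) ^ (Fintype.card V) = (q : ℚ) ^ (S.card + multigraphComponents ε S) := by
    exact_mod_cast hmain
  have hz : ((S.card : ℤ) - ((Fintype.card V : ℤ) - (multigraphComponents ε S : ℤ)))
      = ((S.card + multigraphComponents ε S : ℕ) : ℤ) - ((Fintype.card V : ℕ) : ℤ) := by
    push_cast
    ring
  rw [hz, zpow_sub₀ hq0, zpow_natCast, zpow_natCast, ← hmainQ]
  exact mul_div_cancel_right₀ _ (pow_ne_zero _ hq0)
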